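/- (Remark 1.2(2).) Let U ⊆ ℝⁿ be open, V : U → ℝⁿ a real-analytic vector field, and X ⊆ U. Assume the triple (U, V, X) is transverse, i.e. for every q ∈ X there exist an open neighborhood W ⊆ U of q and a real-analytic function f : W → ℝ such that X ∩ W ⊆ f⁻¹(0) and (fderiv f q)(V(q)) ≠ 0. Then for every compact set K ⊆ X there exists δ > 0 such that for every p ∈ K and every integral curve γ : I → U of V with 0 ∈ I ⊆ (−δ, δ) and γ(0) = p, one has γ(t) ∉ X for all t ∈ I with t ≠ 0. -/

import Mathlib

open Metric Set

/-- One-sided escape lemma: a curve with derivative bounded by `M` while inside the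
closed ball of radius `r` stays in that ball for nonnegative times `t₁` with `M * t₁ < r`. -/
lemma stay_in_ball_nonneg {E : Type*} [NormedAddCommGroup E] [NormedSpace ℝ E]
    (γ v : ℝ → E) (I : Set ℝ) (hI : I.OrdConnected) (h0 : (0:ℝ) ∈ I)
    (hd : ∀ t ∈ I, HasDerivWithinAt γ (v t) I t)
    (M r : ℝ) (hr : 0 < r) (hM : 0 ≤ M)
    (hb : ∀ t ∈ I, γ t ∈ Metric.closedBall (γ 0) r → ‖v t‖ ≤ M)
    (t₁ : ℝ) (ht₁ : t₁ ∈ I) (h0t : 0 ≤ t₁) (hMt : M * t₁ < r) :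
    γ t₁ ∈ Metric.closedBall (γ 0) r := by
  by_contra hout
  have hsub : Set.Icc (0:ℝ) t₁ ⊆ I := hI.out h0 ht₁
  have hcont : ContinuousOn γ (Set.Icc 0 t₁) :=
    fun s hs => ((hd s (hsub hs)).continuousWithinAt).mono hsub
  have hcontd : ContinuousOn (fun t => dist (γ t) (γ 0)) (Set.Icc 0 t₁) :=
    by fun_prop
  set A : Set ℝ := Set.Icc 0 t₁ ∩ (fun t => dist (γ t) (γ 0)) ⁻¹' Set.Ici r with hA
  have hAclosed : IsClosed A :=
    hcontd.preimage_isClosed_of_isClosed isClosed_Icc isClosed_Ici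
  have ht₁A : t₁ ∈ A := by
    refine ⟨⟨h0t, le_rfl⟩, ?_⟩
    have : ¬ dist (γ t₁) (γ 0) ≤ r := by
      simpa [Metric.mem_closedBall] using hout
    exact le_of_lt (lt_of_not_ge this)
  have hAne : A.Nonempty := ⟨t₁, ht₁A⟩
  have hAbdd : BddBelow A := ⟨0, fun x hx => hx.1.1⟩
  set T := sInf A with hT
  have hTA : T ∈ A := hAclosed.csInf_mem hAne hAbdd
  have hT0 : 0 < T := by
    rcases lt_or_eq_of_le hTA.1.1 with h | h
    · exact h
    · exfalso
      have : r ≤ dist (γ T) (γ 0) := hTA.2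
      rw [← h] at this
      simp at this
      linarith
  have hTt₁ : T ≤ t₁ := hTA.1.2
  -- all points of Icc 0 T are within distance r
  have hclaim : ∀ s ∈ Set.Icc (0:ℝ) T, dist (γ s) (γ 0) ≤ r := by
    set D : Set ℝ := Set.Icc 0 t₁ ∩ (fun t => dist (γ t) (γ 0)) ⁻¹' Set.Iic r with hD
    have hDclosed : IsClosed D :=
      hcontd.preimage_isClosed_of_isClosed isClosed_Icc isClosed_Iic
    have hIcoD : Set.Ico (0:ℝ) T ⊆ D := by
      intro s hs
      have hsI : s ∈ Set.Icc (0:ℝ) t₁ := ⟨hs.1, le_trans (le_of_lt hs.2) hTt₁⟩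
      refine ⟨hsI, ?_⟩
      by_contra hle
      have hre : r ≤ dist (γ s) (γ 0) := le_of_lt (lt_of_not_ge hle)
      have : T ≤ s := csInf_le hAbdd ⟨hsI, hre⟩
      exact absurd hs.2 (not_lt_of_ge this)
    have : Set.Icc (0:ℝ) T ⊆ D := by
      have hcl : closure (Set.Ico (0:ℝ) T) = Set.Icc 0 T := closure_Ico (ne_of_lt hT0)
      rw [← hcl]
      calc closure (Set.Ico (0:ℝ) T) ⊆ closure D := closure_mono hIcoD
        _ = D := hDclosed.closure_eq
    exact fun s hs => (this hs).2
  have hsubT : Set.Icc (0:ℝ) T ⊆ I := fun s hs =>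
    hsub ⟨hs.1, le_trans hs.2 hTt₁⟩
  have hmvt : ‖γ T - γ 0‖ ≤ M * ‖T - 0‖ := by
    refine Convex.norm_image_sub_le_of_norm_hasDerivWithin_le
      (f := γ) (f' := v) (s := Set.Icc 0 T) (C := M)
      (fun s hs => (hd s (hsubT hs)).mono hsubT)
      (fun s hs => hb s (hsubT hs) (Metric.mem_closedBall.mpr (hclaim s hs)))
      (convex_Icc 0 T) ⟨le_rfl, le_of_lt hT0⟩ ⟨le_of_lt hT0, le_rfl⟩
  have h1 : r ≤ ‖γ T - γ 0‖ := by rw [← dist_eq_norm]; exact hTA.2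
  have h2 : ‖T - (0:ℝ)‖ = T := by
    rw [sub_zero, Real.norm_eq_abs, abs_of_pos hT0]
  rw [h2] at hmvt
  have h3 : M * T ≤ M * t₁ := mul_le_mul_of_nonneg_left hTt₁ hM
  linarith

/-- Two-sided escape lemma. -/
lemma stay_in_ball {E : Type*} [NormedAddCommGroup E] [NormedSpace ℝ E]
    (γ v : ℝ → E) (I : Set ℝ) (hI : I.OrdConnected) (h0 : (0:ℝ) ∈ I)
    (hd : ∀ t ∈ I, HasDerivWithinAt γ (v t) I t)
    (M r : ℝ) (hr : 0 < r) (hM : 0 ≤ M)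
    (hb : ∀ t ∈ I, γ t ∈ Metric.closedBall (γ 0) r → ‖v t‖ ≤ M)
    (t₁ : ℝ) (ht₁ : t₁ ∈ I) (hMt : M * |t₁| < r) :
    γ t₁ ∈ Metric.closedBall (γ 0) r := by
  rcases le_total 0 t₁ with h | h
  · exact stay_in_ball_nonneg γ v I hI h0 hd M r hr hM hb t₁ ht₁ h
      (by rwa [abs_of_nonneg h] at hMt)
  · -- reverse time
    set J : Set ℝ := Neg.neg ⁻¹' I with hJ
    have hJoc : J.OrdConnected := by
      constructor
      intro x hx y hy z hz
      exact hI.out hy hx ⟨neg_le_neg hz.2, neg_le_neg hz.1⟩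
    have h0J : (0:ℝ) ∈ J := by simpa [hJ] using h0
    set η : ℝ → E := fun s => γ (-s) with hη
    have hη0 : η 0 = γ 0 := by simp [hη]
    have hηd : ∀ s ∈ J, HasDerivWithinAt η (-(v (-s))) J s := by
      intro s hs
      have h1 : HasDerivWithinAt γ (v (-s)) I (-s) := hd (-s) hs
      have h2 : HasDerivWithinAt (fun s : ℝ => -s) (-1) J s :=
        (hasDerivWithinAt_id s J).neg
      have h3 := h1.scomp s h2 (fun x hx => hx)
      simpa [hη, Function.comp_def] using h3
    have hηb : ∀ s ∈ J, η s ∈ Metric.closedBall (η 0) r → ‖-(v (-s))‖ ≤ M := by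
      intro s hs hmem
      rw [norm_neg]
      exact hb (-s) hs (by rwa [hη0] at hmem)
    have hres := stay_in_ball_nonneg η (fun s => -(v (-s))) J hJoc h0J hηd M r hr hM
      hηb (-t₁) (by simpa [hJ] using ht₁) (by linarith)
      (by rwa [abs_of_nonpos h] at hMt)
    rw [hη0] at hres
    simpa [hη] using hres

/-- **Remark 1.2(2).** If the triple `(U, V, X)` is transverse, then for every compact
`K ⊆ X` there is `δ > 0` such that every integral curve of `V` starting at a point of `K`
at time `0` does not return to `X` within time `δ`. -/
theorem remark_transverse_implies_flow_box_property
    (n : ℕ)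
    (U : Set (Fin n → ℝ)) (hU : IsOpen U)
    (V : (Fin n → ℝ) → (Fin n → ℝ)) (hV : AnalyticOnNhd ℝ V U)
    (X : Set (Fin n → ℝ)) (hXU : X ⊆ U)
    (htrans : ∀ q ∈ X, ∃ (W : Set (Fin n → ℝ)) (f : (Fin n → ℝ) → ℝ),
      IsOpen W ∧ q ∈ W ∧ W ⊆ U ∧ AnalyticOnNhd ℝ f W ∧
      (X ∩ W ⊆ f ⁻¹' {0}) ∧ fderiv ℝ f q (V q) ≠ 0) :
    ∀ K ⊆ X, IsCompact K →
      ∃ δ > (0 : ℝ), ∀ p ∈ K, ∀ (I : Set ℝ) (γ : ℝ → (Fin n → ℝ)),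
        I.OrdConnected → (0 : ℝ) ∈ I → I ⊆ Set.Ioo (-δ) δ →
        (∀ t ∈ I, γ t ∈ U) →
        (∀ t ∈ I, HasDerivWithinAt γ (V (γ t)) I t) →
        γ 0 = p →
        ∀ t ∈ I, t ≠ 0 → γ t ∉ X := by
  intro K hKX hK
  have key : ∀ q ∈ K, ∃ (R M : ℝ) (g : (Fin n → ℝ) → ℝ) (c : ℝ),
      0 < R ∧ 0 ≤ M ∧ c ≠ 0 ∧
      (∀ x ∈ Metric.closedBall q R, DifferentiableAt ℝ g x) ∧
      (∀ x ∈ Metric.closedBall q R, ‖V x‖ ≤ M) ∧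
      (∀ x ∈ Metric.closedBall q R, |fderiv ℝ g x (V x) - c| ≤ |c| / 2) ∧
      (∀ x ∈ Metric.closedBall q R, x ∈ X → g x = 0) := by
    intro q hqK
    have hqX : q ∈ X := hKX hqK
    obtain ⟨W, f, hWo, hqW, hWU, hfa, hXf, hFq⟩ := htrans q hqX
    set F : (Fin n → ℝ) → ℝ := fun x => fderiv ℝ f x (V x) with hF
    have hFcont : ContinuousOn F W := by
      have h1 : ContinuousOn (fderiv ℝ f) W := hfa.fderiv.continuousOn
      have h2 : ContinuousOn V W := (hV.mono hWU).continuousOn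
      exact h1.clm_apply h2
    have hc0 : F q ≠ 0 := hFq
    have hcpos : 0 < |F q| / 2 := by positivity
    set S := W ∩ F ⁻¹' Metric.ball (F q) (|F q| / 2) with hS
    have hSopen : IsOpen S := hFcont.isOpen_inter_preimage hWo Metric.isOpen_ball
    have hqS : q ∈ S := ⟨hqW, by simp [Metric.mem_ball, hcpos]⟩
    obtain ⟨r, hrpos, hrS⟩ := Metric.isOpen_iff.mp hSopen q hqS
    have hRpos : 0 < r / 2 := by positivity
    have hRS : Metric.closedBall q (r / 2) ⊆ S := by
      intro x hx
      apply hrS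
      rw [Metric.mem_ball]
      rw [Metric.mem_closedBall] at hx
      linarith
    have hcbW : Metric.closedBall q (r / 2) ⊆ W := fun x hx => (hRS hx).1
    have hcb : IsCompact (Metric.closedBall q (r / 2)) := isCompact_closedBall q _
    have hVcont : ContinuousOn V (Metric.closedBall q (r / 2)) :=
      (hV.mono (hcbW.trans hWU)).continuousOn
    obtain ⟨M0, hM0⟩ := hcb.exists_bound_of_continuousOn hVcont
    refine ⟨r / 2, max M0 0, f, F q, hRpos, le_max_right _ _, hc0, ?_, ?_, ?_, ?_⟩
    · intro x hx
      exact (hfa x (hcbW hx)).differentiableAt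
    · intro x hx
      exact le_trans (hM0 x hx) (le_max_left _ _)
    · intro x hx
      have hmem := (hRS hx).2
      have : |F x - F q| < |F q| / 2 := by
        simpa [Metric.mem_ball, Real.dist_eq] using hmem
      exact le_of_lt this
    · intro x hx hxX
      have := hXf ⟨hxX, hcbW hx⟩
      simpa using this
  choose R M g c hR hM hc hgd hVb hFb hg0 using key
  obtain ⟨t, ht⟩ := hK.elim_finite_subcover
      (fun i : K => Metric.ball (i : Fin n → ℝ) (R i i.2 / 2))
      (fun i => Metric.isOpen_ball)
      (fun x hx => Set.mem_iUnion.mpr ⟨⟨x, hx⟩, by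
        simpa using half_pos (hR x hx)⟩)
  by_cases hte : t.Nonempty
  swap
  · refine ⟨1, one_pos, ?_⟩
    intro p hp
    exfalso
    have := ht hp
    rw [Finset.not_nonempty_iff_eq_empty.mp hte] at this
    simpa using this
  · set δ := t.inf' hte (fun i => (R i i.2 / 2) / (M i i.2 + 1)) with hδdef
    have hδpos : 0 < δ := by
      rw [hδdef, Finset.lt_inf'_iff]
      intro i _
      have h1 := hR i i.2
      have h2 := hM i i.2
      positivity
    refine ⟨δ, hδpos, ?_⟩
    intro p hp I γ hIoc h0I hIδ hγU hγd hγ0 s hsI hs0 hsX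
    have hmem := ht hp
    rw [Set.mem_iUnion₂] at hmem
    obtain ⟨i, hit, hpi⟩ := hmem
    rw [Metric.mem_ball] at hpi
    have hδle : δ ≤ (R i i.2 / 2) / (M i i.2 + 1) :=
      Finset.inf'_le _ hit
    have hM0 := hM i i.2
    have hR0 := hR i i.2
    have hM1 : (0:ℝ) < M i i.2 + 1 := by linarith
    have habs : ∀ u ∈ I, |u| < δ := by
      intro u hu
      have := hIδ hu
      rw [Set.mem_Ioo] at this
      exact abs_lt.mpr this
    -- Step 1: the curve stays in closedBall p (R/2)
    have hstay : ∀ u ∈ I, γ u ∈ Metric.closedBall p (R i i.2 / 2) := by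
      intro u hu
      have hball : ∀ w ∈ I, γ w ∈ Metric.closedBall (γ 0) (R i i.2 / 2) →
          ‖V (γ w)‖ ≤ M i i.2 := by
        intro w hw hmemw
        apply hVb i i.2
        rw [Metric.mem_closedBall]
        rw [Metric.mem_closedBall, hγ0] at hmemw
        calc dist (γ w) (i : Fin n → ℝ) ≤ dist (γ w) p + dist p i := dist_triangle _ _ _
          _ ≤ R i i.2 / 2 + R i i.2 / 2 := add_le_add hmemw (le_of_lt hpi)
          _ = R i i.2 := by ring
      have hmt : M i i.2 * |u| < R i i.2 / 2 := by
        have h1 : M i i.2 * |u| ≤ M i i.2 * δ :=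
          mul_le_mul_of_nonneg_left (le_of_lt (habs u hu)) hM0
        have h2 : M i i.2 * δ ≤ M i i.2 * ((R i i.2 / 2) / (M i i.2 + 1)) :=
          mul_le_mul_of_nonneg_left hδle hM0
        have h3 : M i i.2 * ((R i i.2 / 2) / (M i i.2 + 1)) <
            (M i i.2 + 1) * ((R i i.2 / 2) / (M i i.2 + 1)) := by
          have : (0:ℝ) < (R i i.2 / 2) / (M i i.2 + 1) := by positivity
          nlinarith
        have h4 : (M i i.2 + 1) * ((R i i.2 / 2) / (M i i.2 + 1)) = R i i.2 / 2 := by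
          field_simp
        linarith
      have := stay_in_ball γ (fun w => V (γ w)) I hIoc h0I hγd (M i i.2)
        (R i i.2 / 2) (by positivity) hM0 hball u hu hmt
      rwa [hγ0] at this
    have hball2 : ∀ u ∈ I, γ u ∈ Metric.closedBall (i : Fin n → ℝ) (R i i.2) := by
      intro u hu
      have h1 := hstay u hu
      rw [Metric.mem_closedBall] at h1 ⊢
      calc dist (γ u) (i : Fin n → ℝ) ≤ dist (γ u) p + dist p i := dist_triangle _ _ _
        _ ≤ R i i.2 / 2 + R i i.2 / 2 := add_le_add h1 (le_of_lt hpi)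
        _ = R i i.2 := by ring
    -- Step 2: the auxiliary function
    set h : ℝ → ℝ := fun u => g i i.2 (γ u) - c i i.2 * u with hh
    have hd : ∀ u ∈ I, HasDerivWithinAt h
        (fderiv ℝ (g i i.2) (γ u) (V (γ u)) - c i i.2) I u := by
      intro u hu
      have h1 : HasFDerivAt (g i i.2) (fderiv ℝ (g i i.2) (γ u)) (γ u) :=
        (hgd i i.2 _ (hball2 u hu)).hasFDerivAt
      have h2 := h1.comp_hasDerivWithinAt u (hγd u hu)
      have h3 : HasDerivWithinAt (fun w : ℝ => c i i.2 * w) (c i i.2) I u := by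
        simpa using (hasDerivWithinAt_id u I).const_mul (c i i.2)
      exact h2.sub h3
    have hbound : ∀ u ∈ I, ‖fderiv ℝ (g i i.2) (γ u) (V (γ u)) - c i i.2‖ ≤ |c i i.2| / 2 := by
      intro u hu
      rw [Real.norm_eq_abs]
      exact hFb i i.2 _ (hball2 u hu)
    have hmvt := Convex.norm_image_sub_le_of_norm_hasDerivWithin_le hd hbound
      (convex_iff_ordConnected.mpr hIoc) h0I hsI
    have hp0 : h 0 = 0 := by
      have : g i i.2 p = 0 := by
        apply hg0 i i.2
        · rw [Metric.mem_closedBall]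
          linarith [le_of_lt hpi]
        · exact hKX hp
      simp [hh, hγ0, this]
    have hps : h s = -(c i i.2 * s) := by
      have : g i i.2 (γ s) = 0 := hg0 i i.2 _ (hball2 s hsI) hsX
      simp [hh, this]
    rw [hp0, hps, sub_zero, sub_zero] at hmvt
    rw [norm_neg, Real.norm_eq_abs, Real.norm_eq_abs, abs_mul] at hmvt
    have hcs : |c i i.2| > 0 := abs_pos.mpr (hc i i.2)
    have hss : |s| > 0 := abs_pos.mpr hs0
    nlinarith
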